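/- In the real normed linear space (ℝ³, ‖·‖_3), the set S = { 2^{-1/3}(1,1,0), 4^{-1/3}(1,-1,2^{1/3}), 4^{-1/3}(1,-1,-2^{1/3}) } is a strongly orthonormal Hamel basis in the sense of Birkhoff-James, but the zero vector θ is NOT the best coapproximation to 4^{-1/3}(1,-1,2^{1/3}) out of span{ 2^{-1/3}(1,1,0), 4^{-1/3}(1,-1,-2^{1/3}) }; that is, there exists g ∈ span{ 2^{-1/3}(1,1,0), 4^{-1/3}(1,-1,-2^{1/3}) } with ‖g‖_3 > ‖4^{-1/3}(1,-1,2^{1/3}) - g‖_3. -/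

import Mathlib

/-- `x` together with the family is strongly orthonormal *relative to* the element `x i₀`
in the sense of Birkhoff-James: all members are unit vectors and
`‖x i₀‖ < ‖x i₀ + ∑_{j ≠ i₀} c j • x j‖` whenever not all the `c j` (`j ≠ i₀`) vanish. -/
def StronglyOrthRel {X : Type*} [NormedAddCommGroup X] [NormedSpace ℝ X]
    {n : ℕ} (x : Fin n → X) (i₀ : Fin n) : Prop :=
  (∀ i, ‖x i‖ = 1) ∧
    ∀ c : Fin n → ℝ, (∃ j, j ≠ i₀ ∧ c j ≠ 0) →
      ‖x i₀‖ < ‖x i₀ + ∑ j ∈ Finset.univ.erase i₀, c j • x j‖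

/-- A finite family of unit vectors that is strongly orthonormal in the sense of
Birkhoff-James. -/
def StronglyOrthSet {X : Type*} [NormedAddCommGroup X] [NormedSpace ℝ X]
    {n : ℕ} (x : Fin n → X) : Prop :=
  ∀ i, StronglyOrthRel x i


open scoped ENNReal

instance : Fact ((1 : ℝ≥0∞) ≤ 3) := ⟨by norm_num⟩

/-- The vector `(a, b, c)` viewed as an element of `(ℝ³, ‖·‖₃)`. -/
noncomputable def vec3 (a b c : ℝ) : PiLp 3 (fun _ : Fin 3 => ℝ) :=
  (WithLp.equiv 3 (Fin 3 → ℝ)).symm ![a, b, c]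

lemma vec3_apply (a b c : ℝ) (i : Fin 3) : vec3 a b c i = ![a,b,c] i := rfl

lemma vec3_smul (r a b c : ℝ) : r • vec3 a b c = vec3 (r*a) (r*b) (r*c) := by
  ext i; fin_cases i <;> simp [vec3]

lemma vec3_add (a b c a' b' c' : ℝ) :
    vec3 a b c + vec3 a' b' c' = vec3 (a+a') (b+b') (c+c') := by
  ext i; fin_cases i <;> simp [vec3]

lemma vec3_sub (a b c a' b' c' : ℝ) :
    vec3 a b c - vec3 a' b' c' = vec3 (a-a') (b-b') (c-c') := by
  ext i; fin_cases i <;> simp [vec3, sub_eq_add_neg]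

lemma vec3_eq_zero {a b c : ℝ} (h : vec3 a b c = 0) : a = 0 ∧ b = 0 ∧ c = 0 := by
  refine ⟨?_, ?_, ?_⟩
  · have := congrFun (congrArg (WithLp.equiv 3 (Fin 3 → ℝ)) h) 0; simpa [vec3] using this
  · have := congrFun (congrArg (WithLp.equiv 3 (Fin 3 → ℝ)) h) 1; simpa [vec3] using this
  · have := congrFun (congrArg (WithLp.equiv 3 (Fin 3 → ℝ)) h) 2; simpa [vec3] using this

lemma norm_vec3 (a b c : ℝ) :
    ‖vec3 a b c‖ = (|a|^3 + |b|^3 + |c|^3) ^ ((1:ℝ)/3) := by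
  rw [PiLp.norm_eq_sum (by norm_num : 0 < (3:ℝ≥0∞).toReal)]
  have h3 : (3:ℝ≥0∞).toReal = 3 := by norm_num
  rw [h3]
  congr 1
  rw [Fin.sum_univ_three]
  simp [vec3_apply, Real.norm_eq_abs]

lemma norm_vec3_eq_one {a b c : ℝ} (h : |a|^3 + |b|^3 + |c|^3 = 1) : ‖vec3 a b c‖ = 1 := by
  rw [norm_vec3, h, Real.one_rpow]

lemma one_lt_norm_vec3 {a b c : ℝ} (h : 1 < |a|^3 + |b|^3 + |c|^3) : 1 < ‖vec3 a b c‖ := by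
  rw [norm_vec3]
  calc (1:ℝ) = 1 ^ ((1:ℝ)/3) := (Real.one_rpow _).symm
    _ < _ := Real.rpow_lt_rpow (by norm_num) h (by norm_num)

lemma norm_vec3_lt {a b c a' b' c' : ℝ} (h : |a|^3 + |b|^3 + |c|^3 < |a'|^3 + |b'|^3 + |c'|^3) :
    ‖vec3 a b c‖ < ‖vec3 a' b' c'‖ := by
  rw [norm_vec3, norm_vec3]
  exact Real.rpow_lt_rpow (by positivity) h (by norm_num)

/-- Strict convexity: `2t³ < |t+s|³ + |t-s|³` for `t > 0`, `s ≠ 0`. -/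
lemma cube_lt (t s : ℝ) (ht : 0 < t) (hs : s ≠ 0) : 2*t^3 < |t+s|^3 + |t-s|^3 := by
  rcases le_or_gt 0 (t+s) with h1 | h1 <;> rcases le_or_gt 0 (t-s) with h2 | h2
  · rw [abs_of_nonneg h1, abs_of_nonneg h2]
    have : s^2 > 0 := by positivity
    nlinarith
  · rw [abs_of_nonneg h1, abs_of_neg h2]
    have hu : 0 < s - t := by linarith
    nlinarith [mul_pos (mul_pos ht ht) ht, mul_nonneg (mul_nonneg hu.le hu.le) hu.le,
      mul_nonneg (mul_nonneg ht.le ht.le) hu.le, mul_nonneg (mul_nonneg ht.le hu.le) hu.le]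
  · rw [abs_of_neg h1, abs_of_nonneg h2]
    have hu : 0 < -s - t := by linarith
    nlinarith [mul_pos (mul_pos ht ht) ht, mul_nonneg (mul_nonneg hu.le hu.le) hu.le,
      mul_nonneg (mul_nonneg ht.le ht.le) hu.le, mul_nonneg (mul_nonneg ht.le hu.le) hu.le]
  · exfalso; linarith

lemma cube_lt_abs (t s : ℝ) (hs : s ≠ 0) : 2*|t|^3 < |t+s|^3 + |t-s|^3 := by
  rcases lt_trichotomy t 0 with h | h | h
  · have := cube_lt (-t) (-s) (by linarith) (neg_ne_zero.mpr hs)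
    rw [abs_of_neg h]
    calc 2*(-t)^3 < |(-t)+(-s)|^3 + |(-t)-(-s)|^3 := this
      _ = |t+s|^3 + |t-s|^3 := by
        rw [show (-t)+(-s) = -(t+s) by ring, show (-t)-(-s) = -(t-s) by ring, abs_neg, abs_neg]
  · subst h
    have hpos : 0 < |s| := abs_pos.mpr hs
    simp only [zero_add, zero_sub, abs_neg, abs_zero]
    nlinarith [pow_pos hpos 3]
  · rw [abs_of_pos h]; exact cube_lt t s h hs

/-- Weak convexity: `2|t|³ ≤ |t+s|³ + |t-s|³`. -/
lemma cube_le (t s : ℝ) : 2*|t|^3 ≤ |t+s|^3 + |t-s|^3 := by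
  rcases eq_or_ne s 0 with rfl | hs
  · simp; ring_nf; rfl
  · exact (cube_lt_abs t s hs).le

noncomputable def cc : ℝ := (2:ℝ) ^ ((1:ℝ)/3)

lemma cc_pos : 0 < cc := Real.rpow_pos_of_pos (by norm_num) _

lemma cc_cube : cc^3 = 2 := by
  rw [cc, ← Real.rpow_natCast ((2:ℝ) ^ ((1:ℝ)/3)) 3, ← Real.rpow_mul (by norm_num)]
  norm_num

lemma cc_gt_one : 1 < cc := by
  nlinarith [cc_cube, cc_pos, sq_nonneg (cc - 1), sq_nonneg (cc + 1)]

lemma cube_inj {x y : ℝ} (hx : 0 ≤ x) (hy : 0 ≤ y) (h : x^3 = y^3) : x = y :=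
  (pow_left_strictMonoOn₀ (M₀ := ℝ) (by norm_num : (3:ℕ) ≠ 0)).injOn hx hy h

lemma rpow_cube (x e : ℝ) (hx : 0 < x) : (x ^ (e:ℝ))^3 = x ^ (3*e) := by
  rw [← Real.rpow_natCast (x ^ (e:ℝ)) 3, ← Real.rpow_mul hx.le]
  norm_num [mul_comm]

lemma alpha_eq : (2:ℝ) ^ (-(1/3) : ℝ) = cc^2/2 := by
  apply cube_inj (Real.rpow_nonneg (by norm_num) _) (by positivity)
  rw [rpow_cube _ _ (by norm_num)]
  have h2 : (cc^2/2)^3 = (cc^3)^2/8 := by ring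
  rw [h2, cc_cube, show (3 * -(1/3) : ℝ) = (-1 : ℤ) by norm_num, Real.rpow_intCast]
  norm_num

lemma beta_eq : (4:ℝ) ^ (-(1/3) : ℝ) = cc/2 := by
  apply cube_inj (Real.rpow_nonneg (by norm_num) _) (div_nonneg cc_pos.le (by norm_num))
  rw [rpow_cube _ _ (by norm_num)]
  have h2 : (cc/2)^3 = cc^3/8 := by ring
  rw [h2, cc_cube, show (3 * -(1/3) : ℝ) = (-1 : ℤ) by norm_num, Real.rpow_intCast]
  norm_num

lemma vec3_congr {a b c a' b' c' : ℝ} (h1 : a = a') (h2 : b = b') (h3 : c = c') :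
    vec3 a b c = vec3 a' b' c' := by rw [h1, h2, h3]

lemma two_cube_half : 2*(cc^2/2)^3 = 1 := by linear_combination ((cc^3+2)/4) * cc_cube

/-- inequality for i₀ = 0 -/
lemma key1 (l m : ℝ) (h : l ≠ 0 ∨ m ≠ 0) :
    1 < |cc^2/2 + (l+m)*(cc/2)|^3 + |cc^2/2 - (l+m)*(cc/2)|^3 + |(l-m)*(cc^2/2)|^3 := by
  have hcp := cc_pos
  have h2t := two_cube_half
  rcases eq_or_ne (l+m) 0 with hs | hs
  · have hlm : l - m ≠ 0 := by
      intro h0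
      rcases h with hl | hm
      · exact hl (by linarith)
      · exact hm (by linarith)
    rw [hs]
    simp only [zero_mul, add_zero, sub_zero]
    rw [abs_of_pos (by positivity : (0:ℝ) < cc^2/2)]
    have h3 : 0 < |(l-m)*(cc^2/2)|^3 :=
      pow_pos (abs_pos.mpr (mul_ne_zero hlm (by positivity))) 3
    linarith
  · have hkey := cube_lt (cc^2/2) ((l+m)*(cc/2)) (by positivity)
      (mul_ne_zero hs (by positivity))
    have h3 : 0 ≤ |(l-m)*(cc^2/2)|^3 := by positivity
    linarith

/-- inequality for i₀ = 1, 2 -/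
lemma key2 (l m : ℝ) (h : l ≠ 0 ∨ m ≠ 0) :
    1 < |(1+m)*(cc/2) + l*(cc^2/2)|^3 + |(1+m)*(cc/2) - l*(cc^2/2)|^3
      + |(1-m)*(cc^2/2)|^3 := by
  have hcp := cc_pos
  have hc := cc_cube
  have h2A : 2*|(1+m)*(cc/2)|^3 = |1+m|^3/2 := by
    rw [abs_mul, abs_of_pos (by positivity : (0:ℝ) < cc/2), mul_pow]
    linear_combination (|1+m|^3/4) * hc
  have hC : |(1-m)*(cc^2/2)|^3 = |1-m|^3/2 := by
    rw [abs_mul, abs_of_pos (by positivity : (0:ℝ) < cc^2/2), mul_pow]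
    linear_combination (|1-m|^3*(cc^3+2)/8) * hc
  have step2 : 2 ≤ |1+m|^3 + |1-m|^3 := by
    have := cube_le 1 m
    simpa using this
  rcases h with hl | hm
  · have step1 := cube_lt_abs ((1+m)*(cc/2)) (l*(cc^2/2))
      (mul_ne_zero hl (by positivity))
    linarith
  · have step1 := cube_le ((1+m)*(cc/2)) (l*(cc^2/2))
    have step2' : 2 < |1+m|^3 + |1-m|^3 := by
      have := cube_lt 1 m one_pos hm
      simpa using this
    linarith

theorem stmt_13 :
    (LinearIndependent ℝ
        ![(2 : ℝ) ^ (-(1 / 3) : ℝ) • vec3 1 1 0,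
          (4 : ℝ) ^ (-(1 / 3) : ℝ) • vec3 1 (-1) ((2 : ℝ) ^ ((1 : ℝ) / 3)),
          (4 : ℝ) ^ (-(1 / 3) : ℝ) • vec3 1 (-1) (-(2 : ℝ) ^ ((1 : ℝ) / 3))] ∧
      Submodule.span ℝ (Set.range
        ![(2 : ℝ) ^ (-(1 / 3) : ℝ) • vec3 1 1 0,
          (4 : ℝ) ^ (-(1 / 3) : ℝ) • vec3 1 (-1) ((2 : ℝ) ^ ((1 : ℝ) / 3)),
          (4 : ℝ) ^ (-(1 / 3) : ℝ) • vec3 1 (-1) (-(2 : ℝ) ^ ((1 : ℝ) / 3))]) = ⊤ ∧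
      StronglyOrthSet
        ![(2 : ℝ) ^ (-(1 / 3) : ℝ) • vec3 1 1 0,
          (4 : ℝ) ^ (-(1 / 3) : ℝ) • vec3 1 (-1) ((2 : ℝ) ^ ((1 : ℝ) / 3)),
          (4 : ℝ) ^ (-(1 / 3) : ℝ) • vec3 1 (-1) (-(2 : ℝ) ^ ((1 : ℝ) / 3))]) ∧
    ∃ g ∈ Submodule.span ℝ
        ({(2 : ℝ) ^ (-(1 / 3) : ℝ) • vec3 1 1 0,
          (4 : ℝ) ^ (-(1 / 3) : ℝ) • vec3 1 (-1) (-(2 : ℝ) ^ ((1 : ℝ) / 3))} :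
          Set (PiLp 3 (fun _ : Fin 3 => ℝ))),
      ‖(4 : ℝ) ^ (-(1 / 3) : ℝ) • vec3 1 (-1) ((2 : ℝ) ^ ((1 : ℝ) / 3)) - g‖ < ‖g‖ := by
  have hc := cc_cube
  have hcp := cc_pos
  have hc1 := cc_gt_one
  -- component forms of the three vectors
  have e0 : (2 : ℝ) ^ (-(1 / 3) : ℝ) • vec3 1 1 0 = vec3 (cc^2/2) (cc^2/2) 0 := by
    rw [alpha_eq, vec3_smul]; exact vec3_congr (by ring) (by ring) (by ring)
  have e1 : (4 : ℝ) ^ (-(1 / 3) : ℝ) • vec3 1 (-1) ((2 : ℝ) ^ ((1 : ℝ) / 3))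
      = vec3 (cc/2) (-(cc/2)) (cc^2/2) := by
    rw [beta_eq, vec3_smul]
    exact vec3_congr (by ring) (by ring) (by show cc/2 * cc = cc^2/2; ring)
  have e2 : (4 : ℝ) ^ (-(1 / 3) : ℝ) • vec3 1 (-1) (-(2 : ℝ) ^ ((1 : ℝ) / 3))
      = vec3 (cc/2) (-(cc/2)) (-(cc^2/2)) := by
    rw [beta_eq, vec3_smul]
    exact vec3_congr (by ring) (by ring) (by show cc/2 * -cc = -(cc^2/2); ring)
  rw [e0, e1, e2]
  -- linear independence
  have hcc2 : (cc:ℝ)^2 ≠ 0 := by positivity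
  have hccne : (cc:ℝ) ≠ 0 := ne_of_gt hcp
  have lin : LinearIndependent ℝ
      ![vec3 (cc^2/2) (cc^2/2) 0, vec3 (cc/2) (-(cc/2)) (cc^2/2),
        vec3 (cc/2) (-(cc/2)) (-(cc^2/2))] := by
    rw [Fintype.linearIndependent_iff]
    intro g hg
    rw [Fin.sum_univ_three] at hg
    simp only [Matrix.cons_val_zero, Matrix.cons_val_one, Matrix.head_cons,
      Matrix.cons_val_two, Matrix.tail_cons] at hg
    rw [vec3_smul, vec3_smul, vec3_smul, vec3_add, vec3_add] at hg
    obtain ⟨h1, h2, h3⟩ := vec3_eq_zero hg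
    have hA : g 0 * cc^2 = 0 := by linarith
    have hg0 : g 0 = 0 := by
      rcases mul_eq_zero.mp hA with h | h
      · exact h
      · exact absurd h hcc2
    have hB : (g 1 + g 2) * cc = 0 := by linarith
    have hC : (g 1 - g 2) * cc^2 = 0 := by linarith
    have hB' : g 1 + g 2 = 0 := by
      rcases mul_eq_zero.mp hB with h | h
      · exact h
      · exact absurd h hccne
    have hC' : g 1 - g 2 = 0 := by
      rcases mul_eq_zero.mp hC with h | h
      · exact h
      · exact absurd h hcc2
    have hg1 : g 1 = 0 := by linarith
    have hg2 : g 2 = 0 := by linarith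
    intro i
    fin_cases i
    · exact hg0
    · exact hg1
    · exact hg2
  refine ⟨⟨lin, ?_, ?_⟩, ?_⟩
  · -- span = ⊤
    apply lin.span_eq_top_of_card_eq_finrank
    rw [Module.finrank_eq_card_basis (PiLp.basisFun 3 ℝ (Fin 3))]
  · -- strongly orthonormal
    have hn0 : ‖vec3 (cc^2/2) (cc^2/2) 0‖ = 1 := by
      apply norm_vec3_eq_one
      rw [abs_of_pos (by positivity : (0:ℝ) < cc^2/2), abs_zero]
      linear_combination ((cc^3+2)/4) * hc
    have hn1 : ‖vec3 (cc/2) (-(cc/2)) (cc^2/2)‖ = 1 := by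
      apply norm_vec3_eq_one
      rw [abs_neg, abs_of_pos (by positivity : (0:ℝ) < cc/2),
        abs_of_pos (by positivity : (0:ℝ) < cc^2/2)]
      linear_combination (1/4 + (cc^3+2)/8) * hc
    have hn2 : ‖vec3 (cc/2) (-(cc/2)) (-(cc^2/2))‖ = 1 := by
      apply norm_vec3_eq_one
      rw [abs_neg, abs_neg, abs_of_pos (by positivity : (0:ℝ) < cc/2),
        abs_of_pos (by positivity : (0:ℝ) < cc^2/2)]
      linear_combination (1/4 + (cc^3+2)/8) * hc
    have hall : ∀ i, ‖![vec3 (cc^2/2) (cc^2/2) 0, vec3 (cc/2) (-(cc/2)) (cc^2/2),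
        vec3 (cc/2) (-(cc/2)) (-(cc^2/2))] i‖ = 1 := by
      intro i
      fin_cases i <;>
        simp only [Matrix.cons_val_zero, Matrix.cons_val_one, Matrix.head_cons,
          Matrix.cons_val_two, Matrix.tail_cons, Fin.isValue] <;>
        first
          | exact hn0
          | exact hn1
          | exact hn2
    have rel0 : StronglyOrthRel ![vec3 (cc^2/2) (cc^2/2) 0, vec3 (cc/2) (-(cc/2)) (cc^2/2),
        vec3 (cc/2) (-(cc/2)) (-(cc^2/2))] 0 := by
      refine ⟨hall, ?_⟩
      intro co hco
      have herase : (Finset.univ.erase (0 : Fin 3)) = {1, 2} := by decide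
      rw [herase, Finset.sum_insert (by decide), Finset.sum_singleton]
      simp only [Matrix.cons_val_zero, Matrix.cons_val_one, Matrix.head_cons,
        Matrix.cons_val_two, Matrix.tail_cons, Fin.isValue]
      rw [vec3_smul, vec3_smul, vec3_add, vec3_add]
      have hv : vec3 (cc^2/2 + (co 1 * (cc/2) + co 2 * (cc/2)))
            (cc^2/2 + (co 1 * -(cc/2) + co 2 * -(cc/2)))
            (0 + (co 1 * (cc^2/2) + co 2 * -(cc^2/2)))
          = vec3 (cc^2/2 + (co 1 + co 2)*(cc/2)) (cc^2/2 - (co 1 + co 2)*(cc/2))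
            ((co 1 - co 2)*(cc^2/2)) :=
        vec3_congr (by ring) (by ring) (by ring)
      rw [hv, hn0]
      apply one_lt_norm_vec3
      apply key1
      obtain ⟨j, hj, hcj⟩ := hco
      fin_cases j
      · exact absurd rfl hj
      · exact Or.inl hcj
      · exact Or.inr hcj
    have rel1 : StronglyOrthRel ![vec3 (cc^2/2) (cc^2/2) 0, vec3 (cc/2) (-(cc/2)) (cc^2/2),
        vec3 (cc/2) (-(cc/2)) (-(cc^2/2))] 1 := by
      refine ⟨hall, ?_⟩
      intro co hco
      have herase : (Finset.univ.erase (1 : Fin 3)) = {0, 2} := by decide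
      rw [herase, Finset.sum_insert (by decide), Finset.sum_singleton]
      simp only [Matrix.cons_val_zero, Matrix.cons_val_one, Matrix.head_cons,
        Matrix.cons_val_two, Matrix.tail_cons, Fin.isValue]
      rw [vec3_smul, vec3_smul, vec3_add, vec3_add]
      have hv : vec3 (cc/2 + (co 0 * (cc^2/2) + co 2 * (cc/2)))
            (-(cc/2) + (co 0 * (cc^2/2) + co 2 * -(cc/2)))
            (cc^2/2 + (co 0 * 0 + co 2 * -(cc^2/2)))
          = vec3 ((1 + co 2)*(cc/2) + co 0 * (cc^2/2))
            (-((1 + co 2)*(cc/2) - co 0 * (cc^2/2)))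
            ((1 - co 2)*(cc^2/2)) :=
        vec3_congr (by ring) (by ring) (by ring)
      rw [hv, hn1]
      apply one_lt_norm_vec3
      rw [abs_neg]
      apply key2
      obtain ⟨j, hj, hcj⟩ := hco
      fin_cases j
      · exact Or.inl hcj
      · exact absurd rfl hj
      · exact Or.inr hcj
    have rel2 : StronglyOrthRel ![vec3 (cc^2/2) (cc^2/2) 0, vec3 (cc/2) (-(cc/2)) (cc^2/2),
        vec3 (cc/2) (-(cc/2)) (-(cc^2/2))] 2 := by
      refine ⟨hall, ?_⟩
      intro co hco
      have herase : (Finset.univ.erase (2 : Fin 3)) = {0, 1} := by decide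
      rw [herase, Finset.sum_insert (by decide), Finset.sum_singleton]
      simp only [Matrix.cons_val_zero, Matrix.cons_val_one, Matrix.head_cons,
        Matrix.cons_val_two, Matrix.tail_cons, Fin.isValue]
      rw [vec3_smul, vec3_smul, vec3_add, vec3_add]
      have hv : vec3 (cc/2 + (co 0 * (cc^2/2) + co 1 * (cc/2)))
            (-(cc/2) + (co 0 * (cc^2/2) + co 1 * -(cc/2)))
            (-(cc^2/2) + (co 0 * 0 + co 1 * (cc^2/2)))
          = vec3 ((1 + co 1)*(cc/2) + co 0 * (cc^2/2))
            (-((1 + co 1)*(cc/2) - co 0 * (cc^2/2)))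
            (-((1 - co 1)*(cc^2/2))) :=
        vec3_congr (by ring) (by ring) (by ring)
      rw [hv, hn2]
      apply one_lt_norm_vec3
      rw [abs_neg, abs_neg]
      apply key2
      obtain ⟨j, hj, hcj⟩ := hco
      fin_cases j
      · exact Or.inl hcj
      · exact Or.inr hcj
      · exact absurd rfl hj
    intro i₀
    fin_cases i₀
    · exact rel0
    · exact rel1
    · exact rel2
  · -- best coapproximation fails
    refine ⟨(-2 : ℝ) • vec3 (cc^2/2) (cc^2/2) 0 + (2 : ℝ) • vec3 (cc/2) (-(cc/2)) (-(cc^2/2)),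
      ?_, ?_⟩
    · exact Submodule.add_mem _
        (Submodule.smul_mem _ _ (Submodule.subset_span (Set.mem_insert _ _)))
        (Submodule.smul_mem _ _ (Submodule.subset_span (Set.mem_insert_of_mem _ rfl)))
    · rw [vec3_smul, vec3_smul, vec3_add]
      have hg : vec3 (-2 * (cc^2/2) + 2 * (cc/2)) (-2 * (cc^2/2) + 2 * -(cc/2))
            (-2 * 0 + 2 * -(cc^2/2))
          = vec3 (-(cc^2 - cc)) (-(cc^2 + cc)) (-(cc^2)) :=
        vec3_congr (by ring) (by ring) (by ring)
      rw [hg, vec3_sub]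
      have hd : vec3 (cc/2 - -(cc^2 - cc)) (-(cc/2) - -(cc^2 + cc)) (cc^2/2 - -(cc^2))
          = vec3 (cc^2 - cc/2) (cc^2 + cc/2) (3*(cc^2)/2) :=
        vec3_congr (by ring) (by ring) (by ring)
      rw [hd]
      apply norm_vec3_lt
      have habs : ∀ x : ℝ, 0 ≤ x → |x| = x := fun x hx => abs_of_nonneg hx
      rw [abs_neg, abs_neg, abs_neg,
        habs _ (by nlinarith : (0:ℝ) ≤ cc^2 - cc/2),
        habs _ (by positivity : (0:ℝ) ≤ cc^2 + cc/2),
        habs _ (by positivity : (0:ℝ) ≤ 3*(cc^2)/2),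
        habs _ (by nlinarith : (0:ℝ) ≤ cc^2 - cc),
        habs _ (by positivity : (0:ℝ) ≤ cc^2 + cc),
        habs _ (by positivity : (0:ℝ) ≤ cc^2)]
      have hc6 : cc^6 = 4 := by linear_combination (cc^3+2)*hc
      have hc4 : cc^4 = 2*cc := by linear_combination cc*hc
      nlinarith [hc, hc1, hc4, hc6]
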